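/- Let G be a group, x, y ∈ G, d ≥ 1, and suppose (x^d y^d)^d x^d = 1 in G and G is torsion-free with unique commutation of powers (i.e., [a^k, b^k] = 1 implies [a,b] = 1 for k ≠ 0). Then [x, y] = 1. -/

import Mathlib

open scoped commutatorElement

theorem commutes_of_vword_trivial {G : Type*} [Group G]
    (htf : ∀ (g : G) (n : ℤ), n ≠ 0 → g ^ n = 1 → g = 1)
    (hcomm : ∀ (a b : G) (k : ℤ), k ≠ 0 → ⁅a ^ k, b ^ k⁆ = 1 → ⁅a, b⁆ = 1)
    (x y : G) (d : ℕ) (hd : 1 ≤ d)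
    (hrel : (x ^ d * y ^ d) ^ d * x ^ d = 1) :
    ⁅x, y⁆ = 1 := by
  have hdz : (d : ℤ) ≠ 0 := by
    positivity
  have h1 : (x ^ d * y ^ d) ^ d = (x ^ d)⁻¹ := by
    rw [eq_inv_iff_mul_eq_one]; exact hrel
  have h2 : ⁅(x ^ d * y ^ d) ^ (d : ℤ), x ^ (d : ℤ)⁆ = 1 := by
    rw [zpow_natCast, zpow_natCast, h1, commutatorElement_def]
    group
  have h3 : ⁅x ^ d * y ^ d, x⁆ = 1 := hcomm _ x d hdz h2
  have hAx : x ^ d * y ^ d * x = x * (x ^ d * y ^ d) :=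
    commutatorElement_eq_one_iff_mul_comm.mp h3
  have hyx : y ^ d * x = x * y ^ d := by
    have h : x ^ d * (y ^ d * x) = x ^ d * (x * y ^ d) := by
      rw [← mul_assoc, hAx]; group
    exact mul_left_cancel h
  have hc : Commute (y ^ d) (x ^ d) := (show Commute (y ^ d) x from hyx).pow_right d
  have h4 : ⁅y, x⁆ = 1 := by
    refine hcomm y x d hdz ?_
    rw [zpow_natCast, zpow_natCast]
    exact commutatorElement_eq_one_iff_mul_comm.mpr hc
  exact commutatorElement_eq_one_iff_mul_comm.mpr
    (commutatorElement_eq_one_iff_mul_comm.mp h4).symm
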